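/- arXiv:2306.01221 — 2 statements merged into one kernel-verified Lean document; each statement's English description precedes it below -/
import Mathlib

section
/- With the completion-of-squares identity holding (P solving the Riccati equation with P_T = 0, Υ = BᵀRB positive definite), the feedback control u_t = -Υ^{-1}BᵀP_t x_t minimizes the cost J(u) = (1/2)∫₀ᵀ [x_tᵀQx_t + u_tᵀΥu_t] dt over all continuous controls, and the optimal cost equals (1/2)x₀ᵀP₀x₀. -/
open Matrix

/-- Derivative of the time-varying quadratic form `x(t)ᵀ P(t) x(t)`. -/
lemma hasDerivAt_quadForm {n : ℕ} {x : ℝ → Fin n → ℝ} {P : ℝ → Matrix (Fin n) (Fin n) ℝ}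
    {t : ℝ} {x' : Fin n → ℝ} {P' : Matrix (Fin n) (Fin n) ℝ}
    (hx : HasDerivAt x x' t) (hP : ∀ i j, HasDerivAt (fun s => P s i j) (P' i j) t) :
    HasDerivAt (fun s => x s ⬝ᵥ P s *ᵥ x s)
      (x' ⬝ᵥ P t *ᵥ x t + x t ⬝ᵥ P' *ᵥ x t + x t ⬝ᵥ P t *ᵥ x') t := by
  have hxi : ∀ i, HasDerivAt (fun s => x s i) (x' i) t := hasDerivAt_pi.mp hx
  have h : HasDerivAt (fun s => ∑ i, ∑ j, x s i * (P s i j * x s j))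
      (∑ i, ∑ j, (x' i * (P t i j * x t j) +
        x t i * (P' i j * x t j + P t i j * x' j))) t := by
    refine HasDerivAt.fun_sum fun i _ => HasDerivAt.fun_sum fun j _ => ?_
    exact (hxi i).mul ((hP i j).mul (hxi j))
  have hfun : (fun s => x s ⬝ᵥ P s *ᵥ x s) = fun s => ∑ i, ∑ j, x s i * (P s i j * x s j) := by
    funext s
    simp [dotProduct, mulVec, Finset.mul_sum]
  rw [hfun]
  convert h using 1
  simp [dotProduct, mulVec, Finset.mul_sum, Finset.sum_add_distrib, mul_add]
  ring

/-- The pointwise completion-of-squares identity. -/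
lemma cos_identity {n m : ℕ}
    (A : Matrix (Fin n) (Fin n) ℝ) (B : Matrix (Fin n) (Fin m) ℝ)
    (Q : Matrix (Fin n) (Fin n) ℝ)
    (Υ : Matrix (Fin m) (Fin m) ℝ) (hΥ : Υ.PosDef)
    (P : Matrix (Fin n) (Fin n) ℝ) (hPs : P.IsSymm)
    (x : Fin n → ℝ) (u : Fin m → ℝ) :
    (A *ᵥ x + B *ᵥ u) ⬝ᵥ P *ᵥ x
      + x ⬝ᵥ (Pᵀ * B * Υ⁻¹ * Bᵀ * P - P * A - Aᵀ * P - Q) *ᵥ x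
      + x ⬝ᵥ P *ᵥ (A *ᵥ x + B *ᵥ u)
      = (u + (Υ⁻¹ * Bᵀ * P) *ᵥ x) ⬝ᵥ Υ *ᵥ (u + (Υ⁻¹ * Bᵀ * P) *ᵥ x)
        - (x ⬝ᵥ Q *ᵥ x + u ⬝ᵥ Υ *ᵥ u) := by
  have hdet : IsUnit Υ.det := hΥ.det_pos.ne'.isUnit
  have hΥsymm : Υᵀ = Υ := by
    have := hΥ.1
    simpa [Matrix.IsHermitian, conjTranspose, Matrix.map, Matrix.transpose] using this
  have hΥinvsymm : (Υ⁻¹)ᵀ = Υ⁻¹ := by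
    rw [Matrix.transpose_nonsing_inv, hΥsymm]
  have hinvmul : Υ⁻¹ * Υ = 1 := Matrix.nonsing_inv_mul Υ hdet
  have hmulinv : Υ * Υ⁻¹ = 1 := Matrix.mul_nonsing_inv Υ hdet
  have hPsym : Pᵀ = P := hPs
  have key : ∀ {a b : ℕ} (M : Matrix (Fin a) (Fin b) ℝ) (v : Fin a → ℝ) (w : Fin b → ℝ),
      (M *ᵥ w) ⬝ᵥ v = w ⬝ᵥ Mᵀ *ᵥ v := by
    intro a b M v w
    conv_rhs => rw [dotProduct_mulVec, vecMul_transpose]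
  have e1 : ∀ v : Fin m → ℝ, Υ⁻¹ *ᵥ Υ *ᵥ v = v := by
    intro v; rw [mulVec_mulVec, hinvmul, one_mulVec]
  have e2 : ∀ v : Fin m → ℝ, Υ *ᵥ Υ⁻¹ *ᵥ v = v := by
    intro v; rw [mulVec_mulVec, hmulinv, one_mulVec]
  simp only [add_dotProduct, dotProduct_add, mulVec_add, sub_mulVec, dotProduct_sub,
    ← mulVec_mulVec, transpose_mul, transpose_transpose, hPsym, hΥinvsymm, hΥsymm,
    key, e1, e2]
  ring

/-- The feedback control `u = -Υ⁻¹BᵀP x` minimizes the LQ cost over all continuous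
controls, and the optimal cost equals `(1/2)x₀ᵀP₀x₀`. -/
theorem stmt4 {n m : ℕ} (T : ℝ) (hT : 0 ≤ T)
    (A : Matrix (Fin n) (Fin n) ℝ) (B : Matrix (Fin n) (Fin m) ℝ)
    (Q R : Matrix (Fin n) (Fin n) ℝ) (hQ : Q.PosSemidef) (hR : R.PosSemidef)
    (Υ : Matrix (Fin m) (Fin m) ℝ) (hΥdef : Υ = Bᵀ * R * B) (hΥ : Υ.PosDef)
    (P : ℝ → Matrix (Fin n) (Fin n) ℝ)
    (hPsymm : ∀ t, (P t).IsSymm)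
    (hPode : ∀ t, ∀ i j, HasDerivAt (fun s => P s i j)
      (((P t)ᵀ * B * Υ⁻¹ * Bᵀ * P t - P t * A - Aᵀ * P t - Q) i j) t)
    (hPT : P T = 0)
    (x₀ : Fin n → ℝ) :
    (∀ (u : ℝ → Fin m → ℝ) (x : ℝ → Fin n → ℝ), Continuous u →
        (∀ t, HasDerivAt x (A *ᵥ x t + B *ᵥ u t) t) → x 0 = x₀ →
        (1 / 2 : ℝ) * (x₀ ⬝ᵥ P 0 *ᵥ x₀) ≤
          (1 / 2 : ℝ) * ∫ t in (0:ℝ)..T, (x t ⬝ᵥ Q *ᵥ x t + u t ⬝ᵥ Υ *ᵥ u t)) ∧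
    (∀ (u : ℝ → Fin m → ℝ) (x : ℝ → Fin n → ℝ), Continuous u →
        (∀ t, HasDerivAt x (A *ᵥ x t + B *ᵥ u t) t) → x 0 = x₀ →
        (∀ t, u t = -((Υ⁻¹ * Bᵀ * P t) *ᵥ x t)) →
        (1 / 2 : ℝ) * ∫ t in (0:ℝ)..T, (x t ⬝ᵥ Q *ᵥ x t + u t ⬝ᵥ Υ *ᵥ u t) =
          (1 / 2 : ℝ) * (x₀ ⬝ᵥ P 0 *ᵥ x₀)) := by
  have hPcont : ∀ i j, Continuous fun s => P s i j := by
    intro i j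
    have hd : Differentiable ℝ (fun s => P s i j) := fun t => (hPode t i j).differentiableAt
    exact hd.continuous
  have hPc : Continuous P := continuous_matrix hPcont
  have hKm : Continuous fun t => Υ⁻¹ * Bᵀ * P t := continuous_const.matrix_mul hPc
  -- main integral identity, for any admissible (u, x)
  have main : ∀ (u : ℝ → Fin m → ℝ) (x : ℝ → Fin n → ℝ), Continuous u →
      (∀ t, HasDerivAt x (A *ᵥ x t + B *ᵥ u t) t) → x 0 = x₀ →
      (∫ t in (0:ℝ)..T, (x t ⬝ᵥ Q *ᵥ x t + u t ⬝ᵥ Υ *ᵥ u t))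
        = (x₀ ⬝ᵥ P 0 *ᵥ x₀) +
          ∫ t in (0:ℝ)..T, ((u t + (Υ⁻¹ * Bᵀ * P t) *ᵥ x t) ⬝ᵥ
            Υ *ᵥ (u t + (Υ⁻¹ * Bᵀ * P t) *ᵥ x t)) := by
    intro u x hu hx hx0
    have hxc : Continuous x := by
      have hd : Differentiable ℝ x := fun t => (hx t).differentiableAt
      exact hd.continuous
    have hf : Continuous fun t => x t ⬝ᵥ Q *ᵥ x t + u t ⬝ᵥ Υ *ᵥ u t :=
      (hxc.dotProduct (continuous_const.matrix_mulVec hxc)).add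
        (hu.dotProduct (continuous_const.matrix_mulVec hu))
    have hwc : Continuous fun t => u t + (Υ⁻¹ * Bᵀ * P t) *ᵥ x t :=
      hu.add (hKm.matrix_mulVec hxc)
    have hh : Continuous fun t => (u t + (Υ⁻¹ * Bᵀ * P t) *ᵥ x t) ⬝ᵥ
        Υ *ᵥ (u t + (Υ⁻¹ * Bᵀ * P t) *ᵥ x t) :=
      hwc.dotProduct (continuous_const.matrix_mulVec hwc)
    have hg : ∀ t, HasDerivAt (fun s => x s ⬝ᵥ P s *ᵥ x s)
        ((u t + (Υ⁻¹ * Bᵀ * P t) *ᵥ x t) ⬝ᵥ Υ *ᵥ (u t + (Υ⁻¹ * Bᵀ * P t) *ᵥ x t)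
          - (x t ⬝ᵥ Q *ᵥ x t + u t ⬝ᵥ Υ *ᵥ u t)) t := by
      intro t
      have h1 := hasDerivAt_quadForm (hx t) (hPode t)
      rwa [cos_identity A B Q Υ hΥ (P t) (hPsymm t) (x t) (u t)] at h1
    have hftc : (∫ t in (0:ℝ)..T,
        ((u t + (Υ⁻¹ * Bᵀ * P t) *ᵥ x t) ⬝ᵥ Υ *ᵥ (u t + (Υ⁻¹ * Bᵀ * P t) *ᵥ x t)
          - (x t ⬝ᵥ Q *ᵥ x t + u t ⬝ᵥ Υ *ᵥ u t)))
        = (x T ⬝ᵥ P T *ᵥ x T) - (x 0 ⬝ᵥ P 0 *ᵥ x 0) :=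
      intervalIntegral.integral_eq_sub_of_hasDerivAt (fun t _ => hg t)
        ((hh.sub hf).intervalIntegrable 0 T)
    rw [intervalIntegral.integral_sub (hh.intervalIntegrable 0 T)
      (hf.intervalIntegrable 0 T), hPT, hx0] at hftc
    simp only [zero_mulVec, dotProduct_zero, zero_sub] at hftc
    linarith
  have hnneg : ∀ (w : Fin m → ℝ), 0 ≤ w ⬝ᵥ Υ *ᵥ w := by
    intro w
    simpa using hΥ.posSemidef.dotProduct_mulVec_nonneg w
  constructor
  · intro u x hu hx hx0
    rw [main u x hu hx hx0]
    have : 0 ≤ ∫ t in (0:ℝ)..T, ((u t + (Υ⁻¹ * Bᵀ * P t) *ᵥ x t) ⬝ᵥ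
        Υ *ᵥ (u t + (Υ⁻¹ * Bᵀ * P t) *ᵥ x t)) :=
      intervalIntegral.integral_nonneg hT (fun t _ => hnneg _)
    linarith
  · intro u x hu hx hx0 hopt
    rw [main u x hu hx hx0]
    have hz : ∀ t, (u t + (Υ⁻¹ * Bᵀ * P t) *ᵥ x t) ⬝ᵥ
        Υ *ᵥ (u t + (Υ⁻¹ * Bᵀ * P t) *ᵥ x t) = 0 := by
      intro t
      rw [hopt t]
      simp
    simp only [hz, intervalIntegral.integral_zero, add_zero]
end

section
/- Fundamental identity for the LQ value function: Suppose P : [0,T] → ℝ^{n×n} symmetric solves Ṗ = MᵀΥ^{-1}M - PA - AᵀP - Q with M_t = BᵀP_t, f : [0,T] → ℝ^n solves ḟ_t = M_tᵀΥ^{-1}h_t - Aᵀf_t - P_tEd_t + Qr with h_t = Bᵀf_t + BᵀREd_t, and H solves Ḣ_t = (1/2)h_tᵀΥ^{-1}h_t - d_tᵀEᵀf_t - (1/2)rᵀQr - (1/2)d_tᵀEᵀREd_t. Then for any trajectory ẋ_t = Ax_t + Bu_t + Ed_t, d/dt[(1/2)x_tᵀP_tx_t + x_tᵀf_t + H_t]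 = (1/2)(u_t + Υ^{-1}M_tx_t + Υ^{-1}h_t)ᵀΥ(u_t + Υ^{-1}M_tx_t + Υ^{-1}h_t) - (1/2)(x_t - r)ᵀQ(x_t - r) - (1/2)(Bu_t + Ed_t)ᵀR(Bu_t + Ed_t). -/
open Matrix

private lemma orient {a b : ℕ} (M : Matrix (Fin a) (Fin b) ℝ) (w : Fin b → ℝ) (v : Fin a → ℝ) :
    (M *ᵥ w) ⬝ᵥ v = w ⬝ᵥ Mᵀ *ᵥ v := by
  rw [dotProduct_comm, dotProduct_mulVec, ← mulVec_transpose, dotProduct_comm]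

private lemma orient' {a b : ℕ} (v : Fin a → ℝ) (M : Matrix (Fin a) (Fin b) ℝ) (w : Fin b → ℝ) :
    v ⬝ᵥ M *ᵥ w = w ⬝ᵥ Mᵀ *ᵥ v := by
  rw [dotProduct_mulVec, ← mulVec_transpose, dotProduct_comm]

private lemma cancel_left {a : ℕ} {X Y : Matrix (Fin a) (Fin a) ℝ} (h1 : X * Y = 1)
    {ι : Type*} (M : Matrix (Fin a) ι ℝ) : X * (Y * M) = M := by
  rw [← Matrix.mul_assoc, h1, Matrix.one_mul]

/-- Fundamental identity for the LQ value function with disturbance: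
derivative of `(1/2)xᵀPx + xᵀf + H` along trajectories. -/
theorem stmt15 {n m q : ℕ}
    (A : Matrix (Fin n) (Fin n) ℝ) (B : Matrix (Fin n) (Fin m) ℝ)
    (E : Matrix (Fin n) (Fin q) ℝ)
    (Q R : Matrix (Fin n) (Fin n) ℝ) (hQ : Q.PosSemidef) (hR : R.PosSemidef)
    (Υ : Matrix (Fin m) (Fin m) ℝ) (hΥdef : Υ = Bᵀ * R * B) (hΥ : Υ.PosDef)
    (r : Fin n → ℝ) (d : ℝ → Fin q → ℝ) (hd : Continuous d)
    (P : ℝ → Matrix (Fin n) (Fin n) ℝ) (hPsymm : ∀ t, (P t).IsSymm)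
    (hPode : ∀ t, ∀ i j, HasDerivAt (fun s => P s i j)
      (((Bᵀ * P t)ᵀ * Υ⁻¹ * (Bᵀ * P t) - P t * A - Aᵀ * P t - Q) i j) t)
    (h : ℝ → Fin m → ℝ)
    (f : ℝ → Fin n → ℝ)
    (hhdef : ∀ t, h t = Bᵀ *ᵥ f t + (Bᵀ * R * E) *ᵥ d t)
    (hfode : ∀ t, HasDerivAt f
      ((Bᵀ * P t)ᵀ *ᵥ (Υ⁻¹ *ᵥ h t) - Aᵀ *ᵥ f t - (P t * E) *ᵥ d t + Q *ᵥ r) t)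
    (H : ℝ → ℝ)
    (hHode : ∀ t, HasDerivAt H
      ((1 / 2 : ℝ) * (h t ⬝ᵥ Υ⁻¹ *ᵥ h t) - d t ⬝ᵥ Eᵀ *ᵥ f t
        - (1 / 2 : ℝ) * (r ⬝ᵥ Q *ᵥ r)
        - (1 / 2 : ℝ) * (d t ⬝ᵥ (Eᵀ * R * E) *ᵥ d t)) t)
    (u : ℝ → Fin m → ℝ) (hu : Continuous u)
    (x : ℝ → Fin n → ℝ)
    (hx : ∀ t, HasDerivAt x (A *ᵥ x t + B *ᵥ u t + E *ᵥ d t) t) :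
    ∀ t, HasDerivAt
      (fun s => (1 / 2 : ℝ) * (x s ⬝ᵥ P s *ᵥ x s) + x s ⬝ᵥ f s + H s)
      ((1 / 2 : ℝ) * ((u t + Υ⁻¹ *ᵥ ((Bᵀ * P t) *ᵥ x t) + Υ⁻¹ *ᵥ h t) ⬝ᵥ
          Υ *ᵥ (u t + Υ⁻¹ *ᵥ ((Bᵀ * P t) *ᵥ x t) + Υ⁻¹ *ᵥ h t))
        - (1 / 2 : ℝ) * ((x t - r) ⬝ᵥ Q *ᵥ (x t - r))
        - (1 / 2 : ℝ) * ((B *ᵥ u t + E *ᵥ d t) ⬝ᵥ R *ᵥ (B *ᵥ u t + E *ᵥ d t))) t := by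
  intro t
  -- abbreviations
  set x' : Fin n → ℝ := A *ᵥ x t + B *ᵥ u t + E *ᵥ d t with hx'def
  set P' : Matrix (Fin n) (Fin n) ℝ :=
    (Bᵀ * P t)ᵀ * Υ⁻¹ * (Bᵀ * P t) - P t * A - Aᵀ * P t - Q with hP'def
  set f' : Fin n → ℝ :=
    (Bᵀ * P t)ᵀ *ᵥ (Υ⁻¹ *ᵥ h t) - Aᵀ *ᵥ f t - (P t * E) *ᵥ d t + Q *ᵥ r with hf'def
  -- componentwise derivatives
  have hxc : ∀ i, HasDerivAt (fun s => x s i) (x' i) t := fun i => hasDerivAt_pi.mp (hx t) i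
  have hfc : ∀ i, HasDerivAt (fun s => f s i) (f' i) t := fun i => hasDerivAt_pi.mp (hfode t) i
  -- derivative of the quadratic part
  have hquad : HasDerivAt (fun s => x s ⬝ᵥ P s *ᵥ x s)
      (x' ⬝ᵥ P t *ᵥ x t + x t ⬝ᵥ P' *ᵥ x t + x t ⬝ᵥ P t *ᵥ x') t := by
    have e : ∀ s, x s ⬝ᵥ P s *ᵥ x s = ∑ i, x s i * ∑ j, P s i j * x s j := by
      intro s; simp [dotProduct, mulVec]
    have key : HasDerivAt (fun s => ∑ i, x s i * ∑ j, P s i j * x s j)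
        (∑ i, (x' i * ∑ j, P t i j * x t j
          + x t i * ∑ j, (P' i j * x t j + P t i j * x' j))) t := by
      apply HasDerivAt.fun_sum
      intro i _
      exact (hxc i).mul (HasDerivAt.fun_sum fun j _ => ((hPode t i j).mul (hxc j)))
    have e2 : (fun s => x s ⬝ᵥ P s *ᵥ x s)
        = fun s => ∑ i, x s i * ∑ j, P s i j * x s j := funext e
    rw [e2]
    convert key using 1
    simp only [dotProduct, mulVec, Finset.sum_add_distrib, mul_add, Finset.mul_sum]
    ring_nf
  -- derivative of the linear part
  have hlin : HasDerivAt (fun s => x s ⬝ᵥ f s) (x' ⬝ᵥ f t + x t ⬝ᵥ f') t := by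
    have e2 : (fun s => x s ⬝ᵥ f s) = fun s => ∑ i, x s i * f s i := rfl
    rw [e2]
    refine (HasDerivAt.fun_sum (fun i _ => (hxc i).mul (hfc i))).congr_deriv ?_
    simp [dotProduct, Finset.sum_add_distrib]
  have total := ((hquad.const_mul ((1:ℝ)/2)).add hlin).add (hHode t)
  refine total.congr_deriv ?_
  -- now the scalar identity
  -- symmetry facts
  have hRs : Rᵀ = R := by
    have := hR.1; rwa [Matrix.IsHermitian, conjTranspose_eq_transpose_of_trivial] at this
  have hQs : Qᵀ = Q := by
    have := hQ.1; rwa [Matrix.IsHermitian, conjTranspose_eq_transpose_of_trivial] at this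
  have hPs : (P t)ᵀ = P t := hPsymm t
  have hUs : Υᵀ = Υ := by
    rw [hΥdef]; rw [Matrix.transpose_mul, Matrix.transpose_mul, transpose_transpose, hRs,
      Matrix.mul_assoc]
  have hGs : Υ⁻¹ᵀ = Υ⁻¹ := by rw [Matrix.transpose_nonsing_inv, hUs]
  have hdet : IsUnit Υ.det := hΥ.det_pos.ne'.isUnit
  have h1 : Υ * Υ⁻¹ = 1 := Matrix.mul_nonsing_inv _ hdet
  have h2 : Υ⁻¹ * Υ = 1 := Matrix.nonsing_inv_mul _ hdet
  have c1 : ∀ {ι : Type} (M : Matrix (Fin m) ι ℝ), Υ * (Υ⁻¹ * M) = M := fun M => cancel_left h1 M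
  have c2 : ∀ {ι : Type} (M : Matrix (Fin m) ι ℝ), Υ⁻¹ * (Υ * M) = M := fun M => cancel_left h2 M
  -- orientation instances (canonical atom order: x t, u t, d t, f t, r)
  have oUX : ∀ (M : Matrix (Fin m) (Fin n) ℝ), u t ⬝ᵥ M *ᵥ x t = x t ⬝ᵥ Mᵀ *ᵥ u t :=
    fun M => orient' _ M _
  have oDX : ∀ (M : Matrix (Fin q) (Fin n) ℝ), d t ⬝ᵥ M *ᵥ x t = x t ⬝ᵥ Mᵀ *ᵥ d t :=
    fun M => orient' _ M _
  have oFX : ∀ (M : Matrix (Fin n) (Fin n) ℝ), f t ⬝ᵥ M *ᵥ x t = x t ⬝ᵥ Mᵀ *ᵥ f t :=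
    fun M => orient' _ M _
  have orX : ∀ (M : Matrix (Fin n) (Fin n) ℝ), r ⬝ᵥ M *ᵥ x t = x t ⬝ᵥ Mᵀ *ᵥ r :=
    fun M => orient' _ M _
  have oDU : ∀ (M : Matrix (Fin q) (Fin m) ℝ), d t ⬝ᵥ M *ᵥ u t = u t ⬝ᵥ Mᵀ *ᵥ d t :=
    fun M => orient' _ M _
  have oFU : ∀ (M : Matrix (Fin n) (Fin m) ℝ), f t ⬝ᵥ M *ᵥ u t = u t ⬝ᵥ Mᵀ *ᵥ f t :=
    fun M => orient' _ M _
  have orU : ∀ (M : Matrix (Fin n) (Fin m) ℝ), r ⬝ᵥ M *ᵥ u t = u t ⬝ᵥ Mᵀ *ᵥ r :=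
    fun M => orient' _ M _
  have oFD : ∀ (M : Matrix (Fin n) (Fin q) ℝ), f t ⬝ᵥ M *ᵥ d t = d t ⬝ᵥ Mᵀ *ᵥ f t :=
    fun M => orient' _ M _
  have orD : ∀ (M : Matrix (Fin n) (Fin q) ℝ), r ⬝ᵥ M *ᵥ d t = d t ⬝ᵥ Mᵀ *ᵥ r :=
    fun M => orient' _ M _
  have orF : ∀ (M : Matrix (Fin n) (Fin n) ℝ), r ⬝ᵥ M *ᵥ f t = f t ⬝ᵥ Mᵀ *ᵥ r :=
    fun M => orient' _ M _
  have hΥdef' : Υ = Bᵀ * (R * B) := by rw [hΥdef, Matrix.mul_assoc]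
  rw [hx'def, hP'def, hf'def]
  simp only [hhdef t, mulVec_add, add_mulVec, mulVec_sub, sub_mulVec, dotProduct_add, add_dotProduct,
    dotProduct_sub, sub_dotProduct, mulVec_mulVec, orient, Matrix.transpose_mul,
    transpose_transpose, hPs, hQs, hRs, hGs, hUs, Matrix.mul_assoc, c1, c2, h1, h2,
    Matrix.one_mul, Matrix.mul_one, one_mulVec, oUX, oDX, oFX, orX, oDU, oFU, orU, oFD, orD, orF]
  rw [hΥdef']
  ring
end
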